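/- Let q be a prime power, k ≤ s ≤ n, and consider uniformly random k×n matrices G over 𝔽_q. The number of matrices G for which at least one of the n cyclic windows of s consecutive columns (columns i, i+1, …, i+s−1 taken mod n, for i = 0,…,n−1) forms a k×s submatrix of rank strictly less than k is at most n · q^{kn} · q^{k−s}/(q−1). In particular, if n·q^{k−s}/(q−1) < 1, there exists a k×n matrix all of whose cyclic windows of s consecutive columns have rank k. -/

import Mathlib

open Matrix Finset

lemma swfr_rank_lt_iff {k s : ℕ} {F : Type*} [Field F] (M : Matrix (Fin k) (Fin s) F) :
    M.rank < k ↔ ∃ c : Fin k → F, c ≠ 0 ∧ c ᵥ* M = 0 := by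
  have hr : M.rank = Module.finrank F (LinearMap.range M.vecMulLinear) := by
    rw [M.rank_eq_finrank_span_row, range_vecMulLinear]
  have hrn := LinearMap.finrank_range_add_finrank_ker M.vecMulLinear
  rw [Module.finrank_fintype_fun_eq_card, Fintype.card_fin] at hrn
  have hbot : LinearMap.ker M.vecMulLinear ≠ ⊥ ↔ ∃ c : Fin k → F, c ≠ 0 ∧ c ᵥ* M = 0 := by
    rw [Submodule.ne_bot_iff]
    constructor
    · rintro ⟨c, hc, hc0⟩; exact ⟨c, hc0, hc⟩
    · rintro ⟨c, hc0, hc⟩; exact ⟨c, hc, hc0⟩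
  rw [← hbot, ne_eq, ← Submodule.finrank_eq_zero (R := F)]
  omega


lemma swfr_count_vecMul_zero {k s : ℕ} {F : Type*} [Field F] [Fintype F] [DecidableEq F]
    {c : Fin k → F} (hc : c ≠ 0) :
    Fintype.card {M : Matrix (Fin k) (Fin s) F // c ᵥ* M = 0}
      = Fintype.card F ^ (k * s - s) := by
  classical
  let Φ : Matrix (Fin k) (Fin s) F →ₗ[F] (Fin s → F) :=
    { toFun := fun M => c ᵥ* M
      map_add' := by intro A B; ext j; simp [vecMul, dotProduct, Finset.sum_add_distrib, mul_add]
      map_smul' := by intro a A; ext j; simp [vecMul, dotProduct, Finset.mul_sum, mul_left_comm] }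
  obtain ⟨i0, hi0⟩ : ∃ i0, c i0 ≠ 0 := by
    by_contra h; push_neg at h; exact hc (funext h)
  have hsurj : Function.Surjective Φ := by
    intro w
    refine ⟨fun i j => if i = i0 then (c i0)⁻¹ * w j else 0, ?_⟩
    ext j
    simp only [Φ, LinearMap.coe_mk, AddHom.coe_mk, vecMul, dotProduct]
    rw [Finset.sum_eq_single i0]
    · rw [if_pos rfl, mul_inv_cancel_left₀ hi0]
    · intro b _ hb; simp [hb]
    · simp
  have hrn := LinearMap.finrank_range_add_finrank_ker Φ
  rw [LinearMap.range_eq_top.mpr hsurj, finrank_top, Module.finrank_fintype_fun_eq_card,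
    Fintype.card_fin, Module.finrank_matrix] at hrn
  simp only [Fintype.card_fin, Module.finrank_self, mul_one] at hrn
  have hker : Module.finrank F (LinearMap.ker Φ) = k * s - s := by omega
  have : Fintype.card {M : Matrix (Fin k) (Fin s) F // c ᵥ* M = 0}
      = Fintype.card (LinearMap.ker Φ) := by
    apply Fintype.card_congr
    exact Equiv.subtypeEquivRight fun M => (LinearMap.mem_ker (f := Φ)).symm
  rw [this, Module.card_eq_pow_finrank (K := F), hker]

lemma swfr_bad_count (k s : ℕ) (F : Type*) [Field F] [Fintype F] [DecidableEq F] :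
    (Fintype.card F - 1) * Fintype.card {M : Matrix (Fin k) (Fin s) F // M.rank < k}
      ≤ Fintype.card F ^ k * Fintype.card F ^ (k * s - s) := by
  classical
  set q := Fintype.card F with hq
  let T : Finset ((Fin k → F) × Matrix (Fin k) (Fin s) F) :=
    Finset.univ.filter (fun p => p.1 ≠ 0 ∧ p.1 ᵥ* p.2 = 0)
  let Bad : Finset (Matrix (Fin k) (Fin s) F) := Finset.univ.filter (fun M => M.rank < k)
  have h1 : (q - 1) * Bad.card ≤ T.card := by
    calc (q - 1) * Bad.card = ∑ _M ∈ Bad, (q - 1) := by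
          rw [Finset.sum_const, smul_eq_mul, mul_comm]
      _ ≤ ∑ M ∈ Bad, (T.filter (fun p => p.2 = M)).card := by
          apply Finset.sum_le_sum
          intro M hM
          simp only [Bad, Finset.mem_filter] at hM
          obtain ⟨c₀, hc₀, hcM⟩ := (swfr_rank_lt_iff M).mp hM.2
          have : (Finset.univ.erase (0 : F)).card = q - 1 := by
            rw [Finset.card_erase_of_mem (Finset.mem_univ _), Finset.card_univ]
          rw [← this]
          apply Finset.card_le_card_of_injOn (fun a => (a • c₀, M))
          · intro a ha
            simp only [Finset.mem_coe, Finset.mem_erase, Finset.mem_univ, and_true] at ha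
            simp only [T, Finset.mem_coe, Finset.mem_filter, Finset.mem_univ, true_and]
            refine ⟨⟨smul_ne_zero ha hc₀, ?_⟩, trivial⟩
            rw [Matrix.smul_vecMul, hcM, smul_zero]
          · intro a _ b _ hab
            obtain ⟨i, hi⟩ : ∃ i, c₀ i ≠ 0 := by
              by_contra h; push_neg at h; exact hc₀ (funext h)
            have := congrFun (congrArg Prod.fst hab) i
            simp only [Pi.smul_apply, smul_eq_mul] at this
            exact mul_right_cancel₀ hi this
      _ ≤ ∑ M : Matrix (Fin k) (Fin s) F, (T.filter (fun p => p.2 = M)).card :=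
          Finset.sum_le_sum_of_subset (Finset.subset_univ _)
      _ = T.card := (Finset.card_eq_sum_card_fiberwise
            (f := fun p : (Fin k → F) × Matrix (Fin k) (Fin s) F => p.2)
            (fun x _ => by simp)).symm
  have h2 : T.card ≤ q ^ k * q ^ (k * s - s) := by
    have hmap : ∀ p ∈ T, p.1 ∈ Finset.univ.erase (0 : Fin k → F) := by
      intro p hp
      simp only [T, Finset.mem_filter] at hp
      simp [hp.2.1]
    rw [Finset.card_eq_sum_card_fiberwise hmap]
    calc ∑ c ∈ Finset.univ.erase 0, (T.filter (fun p => p.1 = c)).card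
        ≤ ∑ _c ∈ (Finset.univ.erase (0 : Fin k → F)), q ^ (k * s - s) := by
          apply Finset.sum_le_sum
          intro c hc
          simp only [Finset.mem_erase, Finset.mem_univ, and_true] at hc
          have : (Finset.univ.filter (fun M : Matrix (Fin k) (Fin s) F => c ᵥ* M = 0)).card
              = q ^ (k * s - s) := by
            rw [← Fintype.card_subtype, swfr_count_vecMul_zero hc]
          rw [← this]
          apply Finset.card_le_card_of_injOn (fun p => p.2)
          · intro p hp
            simp only [T, Finset.mem_coe, Finset.mem_filter, Finset.mem_univ, true_and] at hp ⊢
            rw [← hp.2]; exact hp.1.2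
          · intro p hp p' hp' hpp
            simp only [T, Finset.mem_coe, Finset.mem_filter] at hp hp'
            exact Prod.ext (hp.2.trans hp'.2.symm) hpp
      _ ≤ q ^ k * q ^ (k * s - s) := by
          rw [Finset.sum_const, smul_eq_mul]
          apply Nat.mul_le_mul_right
          calc (Finset.univ.erase (0 : Fin k → F)).card ≤ Finset.univ.card :=
                Finset.card_le_card (Finset.erase_subset _ _)
            _ = q ^ k := by rw [Finset.card_univ, Fintype.card_fun, Fintype.card_fin]
  calc (q - 1) * Fintype.card {M : Matrix (Fin k) (Fin s) F // M.rank < k}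
      = (q - 1) * Bad.card := by rw [Fintype.card_subtype]
    _ ≤ T.card := h1
    _ ≤ q ^ k * q ^ (k * s - s) := h2



lemma swfr_window_count (k s n : ℕ) [NeZero n] (F : Type*) [Field F] [Fintype F]
    [DecidableEq F] (e : Fin s → ZMod n) (he : Function.Injective e) :
    Fintype.card {G : Matrix (Fin k) (ZMod n) F // (G.submatrix id e).rank < k}
      ≤ Fintype.card {M : Matrix (Fin k) (Fin s) F // M.rank < k}
        * Fintype.card F ^ (k * n - k * s) := by
  classical
  set q := Fintype.card F with hq
  let Φ : Matrix (Fin k) (ZMod n) F →ₗ[F] Matrix (Fin k) (Fin s) F :=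
    { toFun := fun G => G.submatrix id e
      map_add' := fun A B => rfl
      map_smul' := fun a A => rfl }
  have hsurj : Function.Surjective Φ := by
    intro M
    refine ⟨fun i x => if h : ∃ j, e j = x then M i h.choose else 0, ?_⟩
    ext i j
    have hex : ∃ j', e j' = e j := ⟨j, rfl⟩
    simp only [Φ, LinearMap.coe_mk, AddHom.coe_mk, submatrix_apply, id_eq, dif_pos hex]
    change (if h : ∃ j', e j' = e j then M i h.choose else 0) = M i j
    rw [dif_pos hex]
    congr 1
    exact he hex.choose_spec
  -- card of kernel
  have hkercard : Fintype.card (LinearMap.ker Φ) = q ^ (k * n - k * s) := by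
    have hrn := LinearMap.finrank_range_add_finrank_ker Φ
    rw [LinearMap.range_eq_top.mpr hsurj, finrank_top, Module.finrank_matrix,
      Module.finrank_matrix] at hrn
    simp only [Fintype.card_fin, ZMod.card, Module.finrank_self, mul_one] at hrn
    have hle : k * s ≤ k * n := by
      have := Fintype.card_le_of_injective e he
      simp only [Fintype.card_fin, ZMod.card] at this
      exact Nat.mul_le_mul_left k this
    rw [Module.card_eq_pow_finrank (K := F), hq]
    congr 1
    omega
  let Bad : Finset (Matrix (Fin k) (Fin s) F) := Finset.univ.filter (fun M => M.rank < k)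
  let S : Finset (Matrix (Fin k) (ZMod n) F) :=
    Finset.univ.filter (fun G => (G.submatrix id e).rank < k)
  have hmap : ∀ G ∈ S, Φ G ∈ Bad := by
    intro G hG
    simp only [S, Finset.mem_filter] at hG
    simp only [Bad, Finset.mem_filter, Finset.mem_univ, true_and]
    exact hG.2
  have hS : S.card ≤ Bad.card * q ^ (k * n - k * s) := by
    rw [Finset.card_eq_sum_card_fiberwise hmap]
    calc ∑ M ∈ Bad, (S.filter (fun G => Φ G = M)).card
        ≤ ∑ _M ∈ Bad, q ^ (k * n - k * s) := by
          apply Finset.sum_le_sum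
          intro M _
          by_cases hne : (S.filter (fun G => Φ G = M)).Nonempty
          · obtain ⟨G₀, hG₀⟩ := hne
            have hG₀M : Φ G₀ = M := (Finset.mem_filter.mp hG₀).2
            rw [← hkercard, ← Finset.card_univ, ← Fintype.card, Fintype.card_subtype]
            apply Finset.card_le_card_of_injOn (fun G => G - G₀)
            · intro G hG
              simp only [Finset.mem_coe, Finset.mem_filter] at hG
              simp only [Finset.mem_coe, Finset.mem_filter, Finset.mem_univ, true_and, LinearMap.mem_ker,
                map_sub, hG.2, hG₀M, sub_self]
            · intro a _ b _ hab
              exact sub_left_injective hab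
          · rw [Finset.not_nonempty_iff_eq_empty] at hne
            simp [hne]
      _ = Bad.card * q ^ (k * n - k * s) := by
          rw [Finset.sum_const, smul_eq_mul]
  calc Fintype.card {G : Matrix (Fin k) (ZMod n) F // (G.submatrix id e).rank < k}
      = S.card := Fintype.card_subtype _
    _ ≤ Bad.card * q ^ (k * n - k * s) := hS
    _ = Fintype.card {M : Matrix (Fin k) (Fin s) F // M.rank < k} * q ^ (k * n - k * s) := by
        rw [Fintype.card_subtype]


/-- Union bound for the sliding-window technique: the number of `k × n` matrices
`G` over `𝔽_q` (columns indexed cyclically by `ℤ/nℤ`) such that some cyclic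
window of `s` consecutive columns has rank `< k` is at most
`n · q^{kn} · q^{k-s}/(q-1)`. In particular, if `n · q^{k-s}/(q-1) < 1`, some
matrix has every cyclic window of `s` consecutive columns of full rank `k`. -/
theorem sliding_window_full_rank_union_bound
    (q k s n : ℕ) [NeZero n] (hq : IsPrimePow q) (hks : k ≤ s) (hsn : s ≤ n)
    (F : Type*) [Field F] [Fintype F] [DecidableEq F] (hF : Fintype.card F = q) :
    (Nat.card {G : Matrix (Fin k) (ZMod n) F //
        ∃ i : ZMod n,
          (G.submatrix id (fun j : Fin s => i + ((j : ℕ) : ZMod n))).rank < k} : ℝ)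
      ≤ (n : ℝ) * (q : ℝ) ^ (k * n) * (q : ℝ) ^ ((k : ℤ) - (s : ℤ)) / ((q : ℝ) - 1) ∧
    ((n : ℝ) * (q : ℝ) ^ ((k : ℤ) - (s : ℤ)) / ((q : ℝ) - 1) < 1 →
      ∃ G : Matrix (Fin k) (ZMod n) F,
        ∀ i : ZMod n,
          (G.submatrix id (fun j : Fin s => i + ((j : ℕ) : ZMod n))).rank = k) := by
  classical
  have hq2 : 2 ≤ q := hq.two_le
  have hx2 : (2 : ℝ) ≤ (q : ℝ) := by exact_mod_cast hq2
  have hx0 : (0 : ℝ) < (q : ℝ) := by linarith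
  have hx1 : (0 : ℝ) < (q : ℝ) - 1 := by linarith
  have hxne : (q : ℝ) ≠ 0 := ne_of_gt hx0
  have hrank_le : ∀ (G : Matrix (Fin k) (ZMod n) F) (i : ZMod n),
      (G.submatrix id (fun j : Fin s => i + ((j : ℕ) : ZMod n))).rank ≤ k :=
    fun G i => (Matrix.rank_le_card_height _).trans_eq (Fintype.card_fin k)
  rcases Nat.eq_zero_or_pos k with hk0 | hk1
  · -- degenerate case k = 0
    subst hk0
    have hempty : IsEmpty {G : Matrix (Fin 0) (ZMod n) F //
        ∃ i : ZMod n,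
          (G.submatrix id (fun j : Fin s => i + ((j : ℕ) : ZMod n))).rank < 0} := by
      refine ⟨?_⟩
      rintro ⟨G, i, hi⟩
      exact Nat.not_lt_zero _ hi
    constructor
    · rw [Nat.card_of_isEmpty, Nat.cast_zero]
      apply div_nonneg _ (le_of_lt hx1)
      apply mul_nonneg (mul_nonneg (Nat.cast_nonneg n) (pow_nonneg (le_of_lt hx0) _))
      exact le_of_lt (zpow_pos hx0 _)
    · intro _
      exact ⟨0, fun i => Nat.le_zero.mp (hrank_le 0 i)⟩
  -- main case k ≥ 1
  have hinj : ∀ i : ZMod n, Function.Injective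
      (fun j : Fin s => i + ((j : ℕ) : ZMod n)) := by
    intro i a b hab
    simp only at hab
    have h2 : ((a : ℕ) : ZMod n) = ((b : ℕ) : ZMod n) := add_left_cancel hab
    have h3 := congrArg ZMod.val h2
    rw [ZMod.val_natCast_of_lt (lt_of_lt_of_le a.isLt hsn),
        ZMod.val_natCast_of_lt (lt_of_lt_of_le b.isLt hsn)] at h3
    exact Fin.ext h3
  set C1 := Fintype.card {M : Matrix (Fin k) (Fin s) F // M.rank < k} with hC1
  set B := Nat.card {G : Matrix (Fin k) (ZMod n) F //
      ∃ i : ZMod n,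
        (G.submatrix id (fun j : Fin s => i + ((j : ℕ) : ZMod n))).rank < k} with hB
  -- union bound in ℕ
  have hcard : B ≤ n * (C1 * q ^ (k * n - k * s)) := by
    rw [hB, Nat.card_eq_fintype_card, Fintype.card_subtype]
    have hsub : (Finset.univ.filter (fun G : Matrix (Fin k) (ZMod n) F =>
        ∃ i : ZMod n,
          (G.submatrix id (fun j : Fin s => i + ((j : ℕ) : ZMod n))).rank < k))
        ⊆ Finset.univ.biUnion (fun i : ZMod n =>
            Finset.univ.filter (fun G : Matrix (Fin k) (ZMod n) F =>
              (G.submatrix id (fun j : Fin s => i + ((j : ℕ) : ZMod n))).rank < k)) := by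
      intro G hG
      simp only [Finset.mem_filter, Finset.mem_univ, true_and] at hG
      obtain ⟨i, hi⟩ := hG
      exact Finset.mem_biUnion.mpr ⟨i, Finset.mem_univ _,
        Finset.mem_filter.mpr ⟨Finset.mem_univ _, hi⟩⟩
    calc (Finset.univ.filter (fun G : Matrix (Fin k) (ZMod n) F =>
            ∃ i : ZMod n,
              (G.submatrix id (fun j : Fin s => i + ((j : ℕ) : ZMod n))).rank < k)).card
        ≤ ∑ i : ZMod n, (Finset.univ.filter (fun G : Matrix (Fin k) (ZMod n) F =>
            (G.submatrix id (fun j : Fin s => i + ((j : ℕ) : ZMod n))).rank < k)).card :=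
          (Finset.card_le_card hsub).trans Finset.card_biUnion_le
      _ ≤ ∑ _i : ZMod n, C1 * Fintype.card F ^ (k * n - k * s) := by
          apply Finset.sum_le_sum
          intro i _
          rw [← Fintype.card_subtype]
          exact swfr_window_count k s n F _ (hinj i)
      _ = n * (C1 * q ^ (k * n - k * s)) := by
          rw [Finset.sum_const, Finset.card_univ, ZMod.card, smul_eq_mul, hF]
  -- the count of bad k×s matrices
  have hbadcount : (q - 1) * C1 ≤ q ^ k * q ^ (k * s - s) := by
    rw [hC1, ← hF]
    exact swfr_bad_count k s F
  -- combined ℕ inequality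
  have hnat : (q - 1) * B ≤ n * q ^ (k * n + k - s) := by
    have hss : s ≤ k * s := Nat.le_mul_of_pos_left s hk1
    have hsn' : k * s ≤ k * n := Nat.mul_le_mul_left k hsn
    calc (q - 1) * B ≤ (q - 1) * (n * (C1 * q ^ (k * n - k * s))) :=
          Nat.mul_le_mul_left _ hcard
      _ = n * ((q - 1) * C1 * q ^ (k * n - k * s)) := by ring
      _ ≤ n * (q ^ k * q ^ (k * s - s) * q ^ (k * n - k * s)) :=
          Nat.mul_le_mul_left _ (Nat.mul_le_mul_right _ hbadcount)
      _ = n * q ^ (k * n + k - s) := by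
          rw [← pow_add, ← pow_add]
          congr 2
          omega
  -- move to ℝ
  have hreal : ((q - 1 : ℕ) : ℝ) = (q : ℝ) - 1 := by
    rw [Nat.cast_sub (by omega : 1 ≤ q), Nat.cast_one]
  have hRnat : ((q : ℝ) - 1) * (B : ℝ) ≤ (n : ℝ) * (q : ℝ) ^ (k * n + k - s) := by
    rw [← hreal]
    exact_mod_cast hnat
  have hnum : ((q : ℝ)) ^ (k * n + k - s) = (q : ℝ) ^ (k * n) * (q : ℝ) ^ ((k : ℤ) - (s : ℤ)) := by
    have h1 : (q : ℝ) ^ ((k : ℤ) - (s : ℤ)) = (q : ℝ) ^ k / (q : ℝ) ^ s := by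
      rw [zpow_sub₀ hxne, zpow_natCast, zpow_natCast]
    rw [h1, mul_div_assoc', eq_div_iff (pow_ne_zero s hxne), ← pow_add, ← pow_add]
    congr 1
    have : s ≤ k * n := le_trans hsn (Nat.le_mul_of_pos_left n hk1)
    omega
  have hbound : (B : ℝ) ≤ (n : ℝ) * (q : ℝ) ^ (k * n) * (q : ℝ) ^ ((k : ℤ) - (s : ℤ)) / ((q : ℝ) - 1) := by
    rw [le_div_iff₀ hx1, mul_comm (B : ℝ)]
    calc ((q : ℝ) - 1) * (B : ℝ) ≤ (n : ℝ) * (q : ℝ) ^ (k * n + k - s) := hRnat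
      _ = (n : ℝ) * (q : ℝ) ^ (k * n) * (q : ℝ) ^ ((k : ℤ) - (s : ℤ)) := by
          rw [hnum]; ring
  refine ⟨hbound, ?_⟩
  -- existence statement
  intro hlt
  by_contra hcon
  push_neg at hcon
  have hall : ∀ G : Matrix (Fin k) (ZMod n) F,
      ∃ i : ZMod n, (G.submatrix id (fun j : Fin s => i + ((j : ℕ) : ZMod n))).rank < k := by
    intro G
    obtain ⟨i, hi⟩ := hcon G
    exact ⟨i, lt_of_le_of_ne (hrank_le G i) hi⟩
  have htot : Fintype.card (Matrix (Fin k) (ZMod n) F) = q ^ (k * n) := by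
    rw [Module.card_eq_pow_finrank (K := F), hF, Module.finrank_matrix]
    simp [ZMod.card]
  have hBeq : B = q ^ (k * n) := by
    rw [hB, Nat.card_eq_fintype_card, Fintype.card_subtype,
      Finset.filter_true_of_mem (fun G _ => hall G), Finset.card_univ, htot]
  have h1 : ((q : ℝ) ^ (k * n) : ℝ) ≤ (q : ℝ) ^ (k * n)
      * ((n : ℝ) * (q : ℝ) ^ ((k : ℤ) - (s : ℤ)) / ((q : ℝ) - 1)) := by
    calc ((q : ℝ) ^ (k * n) : ℝ) = (B : ℝ) := by rw [hBeq]; push_cast; ring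
      _ ≤ (n : ℝ) * (q : ℝ) ^ (k * n) * (q : ℝ) ^ ((k : ℤ) - (s : ℤ)) / ((q : ℝ) - 1) := hbound
      _ = (q : ℝ) ^ (k * n) * ((n : ℝ) * (q : ℝ) ^ ((k : ℤ) - (s : ℤ)) / ((q : ℝ) - 1)) := by ring
  have hpow : (0 : ℝ) < (q : ℝ) ^ (k * n) := pow_pos hx0 _
  nlinarith [h1, hpow, hlt]
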